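/- Suppose φ : ℝ → ℝ is bounded and satisfies J*φ = φ on [0,∞) and φ = 0 on (-d, 0), where J > 0 on (-d,d). If there exists x̄ ≥ 0 with φ(x̄) ≥ φ⁺ - ε⁴ (where φ⁺ = sup_{x≥0} φ), then the Lebesgue measure of the set {x ≥ 0 : |x - x̄| < d, φ(x) ≤ φ⁺ - ε} is at most 3ε/γ, where γ = min_{|z| ≤ 3d/4} J(z), provided d/4 > ε²/γ. -/

import Mathlib

open MeasureTheory Set


lemma aux_integrable_of_bddsupp {g : ℝ → ℝ} (hm : Measurable g) (D C : ℝ)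
    (hb : ∀ x, |g x| ≤ C) (hs : ∀ x, x ∉ Ioo (-D) D → g x = 0) :
    Integrable g := by
  have hind : Integrable ((Icc (-D) D).indicator fun _ => C) := by
    rw [integrable_indicator_iff measurableSet_Icc]
    exact integrableOn_const measure_Icc_lt_top.ne
  refine hind.mono' hm.aestronglyMeasurable (Filter.Eventually.of_forall fun x => ?_)
  by_cases hx : x ∈ Icc (-D) D
  · rw [indicator_of_mem hx]
    simpa [Real.norm_eq_abs] using hb x
  · rw [indicator_of_notMem hx]
    have : g x = 0 := hs x (fun hx' => hx (Ioo_subset_Icc_self hx'))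
    simp [this]

lemma aux_notIoo {D y : ℝ} (hy : y ∉ Ioo (-D) D) : y ≤ -D ∨ D ≤ y := by
  by_contra hc
  push_neg at hc
  exact hy ⟨hc.1, hc.2⟩

lemma aux_int_mul_bdd {f g : ℝ → ℝ} (hf : Integrable f)
    (hgm : AEStronglyMeasurable g volume) (C : ℝ) (hg : ∀ x, |g x| ≤ C) :
    Integrable (fun x => f x * g x) :=
  (hf.bdd_mul hgm (Filter.Eventually.of_forall fun x => by simpa [Real.norm_eq_abs] using hg x)).congr
    (Filter.Eventually.of_forall fun x => mul_comm _ _)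

lemma aux_fub (a b : ℝ) (g ψ : ℝ → ℝ) (hgm : Measurable g) (hgi : Integrable g)
    (hψ : Measurable ψ) (C : ℝ) (hC : ∀ x, |ψ x| ≤ C) :
    ∫ x in Ioc a b, (∫ y, g (x - y) * ψ y) = ∫ y, ψ y * ∫ x in Ioc a b, g (x - y) := by
  have hC0 : 0 ≤ C := le_trans (abs_nonneg _) (hC 0)
  set μ := volume.restrict (Ioc a b) with hμ
  haveI : IsFiniteMeasure μ := by
    constructor
    rw [hμ, Measure.restrict_apply_univ]
    exact measure_Ioc_lt_top
  have hmeas : AEStronglyMeasurable (Function.uncurry fun x y => g (x - y) * ψ y)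
      (μ.prod volume) :=
    ((hgm.comp (measurable_fst.sub measurable_snd)).mul
      (hψ.comp measurable_snd)).aestronglyMeasurable
  have hint : ∀ x : ℝ, Integrable (fun y => g (x - y) * ψ y) :=
    fun x => aux_int_mul_bdd (hgi.comp_sub_left x) hψ.aestronglyMeasurable C hC
  have key : Integrable (Function.uncurry fun x y => g (x - y) * ψ y) (μ.prod volume) := by
    refine (integrable_prod_iff hmeas).2 ⟨Filter.Eventually.of_forall fun x => hint x, ?_⟩
    have hb : ∀ x : ℝ, (∫ y, ‖g (x - y) * ψ y‖) ≤ C * ∫ y, ‖g y‖ := by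
      intro x
      have h1 : (∫ y, ‖g (x - y) * ψ y‖) ≤ ∫ y, C * ‖g (x - y)‖ := by
        refine integral_mono (hint x).norm ((hgi.comp_sub_left x).norm.const_mul C) fun y => ?_
        rw [norm_mul]
        calc ‖g (x - y)‖ * ‖ψ y‖ ≤ ‖g (x - y)‖ * C :=
              mul_le_mul_of_nonneg_left (by simpa [Real.norm_eq_abs] using hC y) (norm_nonneg _)
          _ = C * ‖g (x - y)‖ := mul_comm _ _
      have h2 : (∫ y, C * ‖g (x - y)‖) = C * ∫ y, ‖g y‖ := by
        rw [integral_const_mul, integral_sub_left_eq_self (fun y => ‖g y‖) volume x]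
      linarith [h1, h2.le]
    refine Integrable.mono' (integrable_const (C * ∫ y, ‖g y‖))
      (hmeas.norm.integral_prod_right') (Filter.Eventually.of_forall fun x => ?_)
    have hnn : 0 ≤ ∫ y, ‖g (x - y) * ψ y‖ := integral_nonneg fun y => norm_nonneg _
    simp only [Function.uncurry_apply_pair]
    rw [Real.norm_of_nonneg hnn]
    exact hb x
  have := integral_integral_swap key
  rw [this]
  congr 1
  funext y
  rw [integral_mul_const]
  exact mul_comm _ _

lemma aux_shift (g : ℝ → ℝ) (hgi : Integrable g) (a b y : ℝ) (hab : a ≤ b) :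
    ∫ x in Ioc a b, g (x - y) =
      (∫ z in Iic (b - y), g z) - ∫ z in Iic (a - y), g z := by
  rw [← intervalIntegral.integral_of_le hab, intervalIntegral.integral_comp_sub_right _ y,
    ← intervalIntegral.integral_Iic_sub_Iic hgi.integrableOn hgi.integrableOn]
lemma aux_sup_nonneg
    (d : ℝ) (hd : 0 < d)
    (J : ℝ → ℝ) (hJc : Continuous J) (hJ0 : ∀ z, 0 ≤ J z)
    (hJe : ∀ z, J (-z) = J z)
    (hJs : ∀ z, z ∉ Ioo (-d) d → J z = 0)
    (hJ1 : ∫ z, J z = 1)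
    (φ : ℝ → ℝ) (hφm : Measurable φ) (C : ℝ) (hφb : ∀ x, |φ x| ≤ C)
    (hφeq : ∀ x : ℝ, 0 ≤ x → (∫ y, J (x - y) * φ y) = φ x)
    (hφ0 : ∀ x ∈ Ioo (-d) (0 : ℝ), φ x = 0)
    (γ : ℝ) (hγpos : 0 < γ)
    (hγle : ∀ z ∈ Icc (-(3 * d / 4)) (3 * d / 4), γ ≤ J z) :
    0 ≤ sSup (φ '' Ici 0) := by
  by_contra hneg
  push_neg at hneg
  set s := sSup (φ '' Ici 0) with hsdef
  have hC0 : 0 ≤ C := le_trans (abs_nonneg _) (hφb 0)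
  have hbdd : BddAbove (φ '' Ici 0) := by
    refine ⟨C, ?_⟩
    rintro _ ⟨x, -, rfl⟩
    exact (abs_le.1 (hφb x)).2
  have hle : ∀ y : ℝ, 0 ≤ y → φ y ≤ s :=
    fun y hy => le_csSup hbdd (mem_image_of_mem φ hy)
  -- J integrable
  have hJK : HasCompactSupport J :=
    HasCompactSupport.intro isCompact_Icc
      (fun x hx => hJs x (fun hx' => hx (Ioo_subset_Icc_self hx')))
  have hJi : Integrable J := hJc.integrable_of_hasCompactSupport hJK
  -- the distribution function F
  set F : ℝ → ℝ := fun t => ∫ z in Iic t, J z with hFdef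
  have hFmono : Monotone F := by
    intro t t' h
    exact setIntegral_mono_set hJi.integrableOn
      (Filter.Eventually.of_forall fun z => hJ0 z)
      (HasSubset.Subset.eventuallyLE (Iic_subset_Iic.2 h))
  have hFmeas : Measurable F := hFmono.measurable
  have hFnn : ∀ t, 0 ≤ F t := fun t => setIntegral_nonneg measurableSet_Iic fun z _ => hJ0 z
  have hcompl : ∀ t : ℝ, F t + (∫ z in Ioi t, J z) = 1 := by
    intro t
    have := integral_add_compl (measurableSet_Iic (a := t)) hJi
    rw [compl_Iic] at this
    rw [← hJ1]
    exact this
  have hFle1 : ∀ t, F t ≤ 1 := by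
    intro t
    have h2 : 0 ≤ ∫ z in Ioi t, J z := setIntegral_nonneg measurableSet_Ioi fun z _ => hJ0 z
    linarith [hcompl t]
  have hF0 : ∀ t : ℝ, t ≤ -d → F t = 0 := by
    intro t ht
    exact setIntegral_eq_zero_of_forall_eq_zero fun z hz =>
      hJs z (fun hmem => absurd hmem.1 (not_lt.2 (le_trans hz ht)))
  have hIoi0 : ∀ t : ℝ, d ≤ t → (∫ z in Ioi t, J z) = 0 := by
    intro t ht
    exact setIntegral_eq_zero_of_forall_eq_zero fun z hz =>
      hJs z (fun hmem => absurd hmem.2 (not_lt.2 (le_trans ht (le_of_lt hz))))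
  have hF1 : ∀ t : ℝ, d ≤ t → F t = 1 := by
    intro t ht
    have := hcompl t
    rw [hIoi0 t ht] at this
    linarith
  have hFrefl : ∀ t : ℝ, F t + F (-t) = 1 := by
    intro t
    have h1 : F (-t) = ∫ z in Iic (-t), J (-z) :=
      setIntegral_congr_fun measurableSet_Iic fun z _ => (hJe z).symm
    have h2 : (∫ z in Iic (-t), J (-z)) = ∫ z in Ioi t, J z := by
      rw [integral_comp_neg_Iic]
      simp
    rw [h1, h2]
    exact hcompl t
  -- the function v
  set v : ℝ → ℝ := fun t => F t - if (0:ℝ) ≤ t then 1 else 0 with hvdef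
  have hvm : Measurable v := by
    apply hFmeas.sub
    exact Measurable.ite measurableSet_Ici measurable_const measurable_const
  have hvb : ∀ t, |v t| ≤ 1 := by
    intro t
    have h1 := hFnn t
    have h2 := hFle1 t
    by_cases h : (0:ℝ) ≤ t
    · simp only [hvdef, h, if_true]
      rw [abs_le]
      constructor <;> linarith
    · simp only [hvdef, h, if_false]
      rw [abs_le]
      constructor <;> linarith
  have hvs : ∀ t, t ∉ Ioo (-d) d → v t = 0 := by
    intro t ht
    have : t ≤ -d ∨ d ≤ t := by
      by_contra hc
      push_neg at hc
      exact ht hc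
    rcases this with h | h
    · have hnot : ¬ (0:ℝ) ≤ t := by linarith
      simp [hvdef, hnot, hF0 t h]
    · have hyes : (0:ℝ) ≤ t := by linarith
      simp [hvdef, hyes, hF1 t h]
  have hvi : Integrable v := aux_integrable_of_bddsupp hvm d 1 hvb hvs
  -- Vt
  set Vt : ℝ → ℝ := fun t => ∫ z in Iic t, v z with hVdef
  have hV0 : ∀ t : ℝ, t ≤ -d → Vt t = 0 := by
    intro t ht
    exact setIntegral_eq_zero_of_forall_eq_zero fun z hz =>
      hvs z (fun hmem => absurd hmem.1 (not_lt.2 (le_trans hz ht)))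
  have hvtot : (∫ z, v z) = 0 := by
    have h1 := integral_add_compl (measurableSet_Iic (a := (0:ℝ))) hvi
    rw [compl_Iic] at h1
    have h2 : (∫ z in Iic (0:ℝ), v z) = ∫ z in Iic (0:ℝ), F z := by
      rw [← setIntegral_congr_set Iio_ae_eq_Iic, ← setIntegral_congr_set Iio_ae_eq_Iic]
      refine setIntegral_congr_fun measurableSet_Iio fun z hz => ?_
      have : ¬ (0:ℝ) ≤ z := not_le.2 hz
      simp [hvdef, this]
    have h3 : (∫ z in Ioi (0:ℝ), v z) = ∫ z in Ioi (0:ℝ), -F (-z) := by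
      refine setIntegral_congr_fun measurableSet_Ioi fun z hz => ?_
      have h0z : (0:ℝ) ≤ z := le_of_lt hz
      have := hFrefl z
      simp only [hvdef, h0z, if_true]
      linarith
    have h4 : (∫ z in Ioi (0:ℝ), -F (-z)) = - ∫ z in Iic (0:ℝ), F z := by
      rw [integral_neg]
      congr 1
      have := integral_comp_neg_Ioi (0:ℝ) F
      simpa using this
    rw [← h1, h2, h3, h4]
    ring
  have hVd : ∀ t : ℝ, d ≤ t → Vt t = 0 := by
    intro t ht
    have h1 := integral_add_compl (measurableSet_Iic (a := t)) hvi
    rw [compl_Iic] at h1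
    have h2 : (∫ z in Ioi t, v z) = 0 :=
      setIntegral_eq_zero_of_forall_eq_zero fun z hz =>
        hvs z (fun hmem => absurd hmem.2 (not_lt.2 (le_trans ht (le_of_lt hz))))
    rw [hvtot, h2] at h1
    simpa using h1
  have hVcont : Continuous Vt := by
    have heq : ∀ t, Vt t = Vt (-d) + ∫ x in (-d)..t, v x := by
      intro t
      have := intervalIntegral.integral_Iic_sub_Iic (hvi.integrableOn (s := Iic (-d)))
        (hvi.integrableOn (s := Iic t))
      simp only [hVdef]
      linarith [this]
    have : Continuous fun t => Vt (-d) + ∫ x in (-d)..t, v x :=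
      continuous_const.add (intervalIntegral.continuous_primitive
        (fun a b => hvi.intervalIntegrable) (-d))
    exact (funext heq) ▸ this
  have hVmeas : Measurable Vt := hVcont.measurable
  have hVb : ∀ t, |Vt t| ≤ 2 * d := by
    intro t
    have h1 : |Vt t| ≤ ∫ z in Iic t, |v z| := by
      simpa [Real.norm_eq_abs] using
        norm_integral_le_integral_norm (μ := volume.restrict (Iic t)) v
    have h2 : (∫ z in Iic t, |v z|) ≤ ∫ z, |v z| :=
      setIntegral_le_integral hvi.abs (Filter.Eventually.of_forall fun z => abs_nonneg _)
    have h3 : (∫ z, |v z|) ≤ ∫ z, (Icc (-d) d).indicator (fun _ => (1:ℝ)) z := by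
      refine integral_mono hvi.abs ?_ fun z => ?_
      · rw [integrable_indicator_iff measurableSet_Icc]
        exact integrableOn_const measure_Icc_lt_top.ne
      · by_cases hz : z ∈ Icc (-d) d
        · rw [indicator_of_mem hz]; exact hvb z
        · rw [indicator_of_notMem hz, hvs z (fun h' => hz (Ioo_subset_Icc_self h'))]
          simp
    have h4 : (∫ z, (Icc (-d) d).indicator (fun _ => (1:ℝ)) z) = 2 * d := by
      rw [integral_indicator_const _ measurableSet_Icc]
      simp [Real.volume_Icc]
      rw [max_eq_left (by linarith)]
      ring
    linarith
  -- integrability of the master integrands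
  have iphiv : ∀ R : ℝ, 0 ≤ R → Integrable (fun y => φ y * v (R - y)) := by
    intro R hR
    refine aux_integrable_of_bddsupp
      (hφm.mul (hvm.comp (measurable_const.sub measurable_id))) (R + d) C ?_ ?_
    · intro y
      calc |φ y * v (R - y)| = |φ y| * |v (R - y)| := abs_mul _ _
        _ ≤ C * 1 := mul_le_mul (hφb y) (hvb _) (abs_nonneg _) hC0
        _ = C := mul_one C
    · intro y hy
      have hnot : R - y ∉ Ioo (-d) d := by
        rcases aux_notIoo hy with h | h
        · exact fun hm => absurd hm.2 (not_lt.2 (by linarith))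
        · exact fun hm => absurd hm.1 (not_lt.2 (by linarith))
      rw [hvs _ hnot, mul_zero]
  set A : ℝ := ∫ y, φ y * v (0 - y) with hAdef
  -- master identity
  have master : ∀ R : ℝ, 0 < R → (∫ y, φ y * v (R - y)) = A := by
    intro R hR
    have e1 : (∫ x in Ioc 0 R, φ x) = ∫ x in Ioc 0 R, (∫ y, J (x - y) * φ y) :=
      setIntegral_congr_fun measurableSet_Ioc fun x hx => (hφeq x (le_of_lt hx.1)).symm
    have e2 := aux_fub 0 R J φ hJc.measurable hJi hφm C hφb
    have e3 : (∫ y, φ y * ∫ x in Ioc 0 R, J (x - y)) =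
        ∫ y, φ y * (F (R - y) - F (0 - y)) := by
      congr 1
      funext y
      rw [aux_shift J hJi 0 R y hR.le]
    have e5 : (∫ x in Ioc 0 R, φ x) = ∫ y, (Ioc (0:ℝ) R).indicator φ y :=
      (integral_indicator measurableSet_Ioc).symm
    have hpt : ∀ y : ℝ, φ y * (F (R - y) - F (0 - y)) =
        (φ y * v (R - y) - φ y * v (0 - y)) + (Ioc (0:ℝ) R).indicator φ y := by
      intro y
      simp only [hvdef]
      by_cases h1 : (0:ℝ) ≤ R - y <;> by_cases h2 : (0:ℝ) ≤ 0 - y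
      · have hy : y ∉ Ioc (0:ℝ) R := fun hmem => absurd hmem.1 (not_lt.2 (by linarith))
        rw [indicator_of_notMem hy, if_pos h1, if_pos h2]
        ring
      · have hy : y ∈ Ioc (0:ℝ) R := ⟨by linarith [not_le.1 h2], by linarith⟩
        rw [indicator_of_mem hy, if_pos h1, if_neg h2]
        ring
      · exfalso
        rw [not_le] at h1
        linarith
      · have hy : y ∉ Ioc (0:ℝ) R := fun hmem => absurd hmem.2 (not_le.2 (by linarith [not_le.1 h1]))
        rw [indicator_of_notMem hy, if_neg h1, if_neg h2]
        ring
    have i1 : Integrable (fun y => φ y * v (R - y)) := iphiv R hR.le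
    have i2 : Integrable (fun y => φ y * v (0 - y)) := iphiv 0 le_rfl
    have i3 : Integrable ((Ioc (0:ℝ) R).indicator φ) := by
      have hcst : Integrable ((Ioc (0:ℝ) R).indicator (fun _ => C)) := by
        rw [integrable_indicator_iff measurableSet_Ioc]
        exact integrableOn_const measure_Ioc_lt_top.ne
      refine hcst.mono' (hφm.indicator measurableSet_Ioc).aestronglyMeasurable
        (Filter.Eventually.of_forall fun y => ?_)
      by_cases hy : y ∈ Ioc (0:ℝ) R
      · rw [indicator_of_mem hy, indicator_of_mem hy]
        simpa [Real.norm_eq_abs] using hφb y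
      · rw [indicator_of_notMem hy, indicator_of_notMem hy]
        simp
    have e6 : (∫ y, φ y * (F (R - y) - F (0 - y))) =
        ((∫ y, φ y * v (R - y)) - (∫ y, φ y * v (0 - y))) + ∫ y, (Ioc (0:ℝ) R).indicator φ y := by
      have hadd : (∫ y, ((φ y * v (R - y) - φ y * v (0 - y)) + (Ioc (0:ℝ) R).indicator φ y)) =
          ((∫ y, φ y * v (R - y)) - (∫ y, φ y * v (0 - y))) + ∫ y, (Ioc (0:ℝ) R).indicator φ y := by
        have i12 : Integrable (fun y => φ y * v (R - y) - φ y * v (0 - y)) volume := i1.sub i2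
        rw [integral_add i12 i3, integral_sub i1 i2]
      rw [← hadd]
      congr 1
      funext y
      exact hpt y
    have echain : (∫ x in Ioc 0 R, φ x) =
        ((∫ y, φ y * v (R - y)) - A) + (∫ x in Ioc 0 R, φ x) := by
      calc (∫ x in Ioc 0 R, φ x) = ∫ x in Ioc 0 R, (∫ y, J (x - y) * φ y) := e1
        _ = ∫ y, φ y * ∫ x in Ioc 0 R, J (x - y) := e2
        _ = ∫ y, φ y * (F (R - y) - F (0 - y)) := e3
        _ = ((∫ y, φ y * v (R - y)) - A) + ∫ y, (Ioc (0:ℝ) R).indicator φ y := by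
            rw [e6, hAdef]
        _ = ((∫ y, φ y * v (R - y)) - A) + (∫ x in Ioc 0 R, φ x) := by rw [← e5]
    linarith
  -- A is negative
  have hc1pos : 0 < γ * (d / 4) := by positivity
  have hFlow : ∀ y : ℝ, 0 < y → y ≤ d / 2 → γ * (d / 4) ≤ F (-y) := by
    intro y hy1 hy2
    have hsub : Icc (-(3 * d / 4)) (-(d / 2)) ⊆ Iic (-y) := by
      intro z hz
      have := hz.2
      simp only [mem_Iic]
      linarith
    have h1 : (∫ z in Icc (-(3 * d / 4)) (-(d / 2)), J z) ≤ F (-y) := by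
      simp only [hFdef]
      exact setIntegral_mono_set hJi.integrableOn
        (Filter.Eventually.of_forall fun z => hJ0 z)
        (HasSubset.Subset.eventuallyLE hsub)
    have h2 : γ * (volume (Icc (-(3 * d / 4)) (-(d / 2)))).toReal ≤
        ∫ z in Icc (-(3 * d / 4)) (-(d / 2)), J z :=
      setIntegral_ge_of_const_le_real measurableSet_Icc (measure_Icc_lt_top).ne
        (fun z hz => hγle z ⟨hz.1, le_trans hz.2 (by linarith)⟩) hJi.integrableOn
    have h3 : (volume (Icc (-(3 * d / 4)) (-(d / 2)))).toReal = d / 4 := by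
      rw [Real.volume_Icc, ENNReal.toReal_ofReal (by linarith)]
      ring
    rw [h3] at h2
    linarith
  have hAneg : A < 0 := by
    have hg : Integrable ((Ioc (0:ℝ) (d/2)).indicator fun _ => s * (γ * (d/4))) := by
      rw [integrable_indicator_iff measurableSet_Ioc]
      exact integrableOn_const measure_Ioc_lt_top.ne
    have hae : (fun y => φ y * v (0 - y)) ≤ᵐ[volume]
        (Ioc (0:ℝ) (d/2)).indicator fun _ => s * (γ * (d/4)) := by
      have hsub : {y : ℝ | ¬ φ y * v (0 - y) ≤
          (Ioc (0:ℝ) (d/2)).indicator (fun _ => s * (γ * (d/4))) y} ⊆ {(0:ℝ)} := by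
        intro y hy
        simp only [mem_setOf_eq] at hy
        by_contra hy0
        apply hy
        have hy0' : y ≠ 0 := fun h => hy0 (by simp [h])
        by_cases hmem : y ∈ Ioc (0:ℝ) (d/2)
        · rw [indicator_of_mem hmem]
          have h2 : ¬ (0:ℝ) ≤ 0 - y := by
            rw [not_le]
            linarith [hmem.1]
          have hv : v (0 - y) = F (0 - y) := by
            simp only [hvdef]
            rw [if_neg h2]
            ring
          have hF : γ * (d/4) ≤ F (0 - y) := by
            have := hFlow y hmem.1 hmem.2
            simpa using this
          calc φ y * v (0 - y) ≤ s * v (0 - y) :=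
                mul_le_mul_of_nonneg_right (hle y hmem.1.le) (by rw [hv]; exact hFnn _)
            _ ≤ s * (γ * (d/4)) := by
                rw [hv]
                exact mul_le_mul_of_nonpos_left hF (le_of_lt hneg)
        · rw [indicator_of_notMem hmem]
          rcases lt_or_gt_of_ne hy0' with hylt | hygt
          · by_cases hyd : -d < y
            · rw [hφ0 y ⟨hyd, hylt⟩]
              simp
            · have hz : v (0 - y) = 0 := by
                push_neg at hyd
                exact hvs _ (fun hm => absurd hm.2 (not_lt.2 (by linarith)))
              rw [hz, mul_zero]
          · have hyd2 : d / 2 < y := by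
              by_contra hcon
              push_neg at hcon
              exact hmem ⟨hygt, hcon⟩
            have h2 : ¬ (0:ℝ) ≤ 0 - y := by
              rw [not_le]
              linarith
            have hv : v (0 - y) = F (0 - y) := by
              simp only [hvdef]
              rw [if_neg h2]
              ring
            rw [hv]
            nlinarith [mul_nonneg (sub_nonneg.2 (hle y hygt.le)) (hFnn (0 - y)),
              mul_nonneg (neg_nonneg.2 hneg.le) (hFnn (0 - y))]
      have hnull : volume {y : ℝ | ¬ φ y * v (0 - y) ≤
          (Ioc (0:ℝ) (d/2)).indicator (fun _ => s * (γ * (d/4))) y} = 0 :=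
        measure_mono_null hsub (measure_singleton 0)
      exact (ae_iff).2 hnull
    have hA1 : A ≤ ∫ y, (Ioc (0:ℝ) (d/2)).indicator (fun _ => s * (γ * (d/4))) y :=
      integral_mono_ae (iphiv 0 le_rfl) hg hae
    have hA2 : (∫ y, (Ioc (0:ℝ) (d/2)).indicator (fun _ => s * (γ * (d/4))) y) =
        (d/2) * (s * (γ * (d/4))) := by
      rw [integral_indicator_const _ measurableSet_Ioc, smul_eq_mul, measureReal_def, Real.volume_Ioc]
      rw [ENNReal.toReal_ofReal (by linarith)]
      ring
    have hfin : (d/2) * (s * (γ * (d/4))) < 0 :=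
      mul_neg_of_pos_of_neg (by linarith) (mul_neg_of_neg_of_pos hneg hc1pos)
    rw [hA2] at hA1
    linarith
  -- boundedness of A * (T - 1)
  have hI1 : Integrable (fun z => |Vt z|) := by
    refine aux_integrable_of_bddsupp hVmeas.abs (2*d) (2*d)
      (fun t => by simpa [abs_abs] using hVb t) ?_
    intro z hz
    rcases aux_notIoo hz with h | h
    · rw [hV0 z (by linarith), abs_zero]
    · rw [hVd z (by linarith), abs_zero]
  set I1 : ℝ := ∫ z, |Vt z| with hI1def
  have hI1nn : 0 ≤ I1 := integral_nonneg fun z => abs_nonneg _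
  have hTbd : ∀ T : ℝ, 1 ≤ T → |A| * (T - 1) ≤ 2 * C * I1 := by
    intro T hT
    have hs1 : (∫ x in Ioc 1 T, (∫ y, v (x - y) * φ y)) = A * (T - 1) := by
      have h1 : ∀ x ∈ Ioc (1:ℝ) T, (∫ y, v (x - y) * φ y) = A := by
        intro x hx
        have hmx := master x (by linarith [hx.1])
        rw [← hmx]
        congr 1
        funext y
        ring
      rw [setIntegral_congr_fun measurableSet_Ioc h1, setIntegral_const, measureReal_def, Real.volume_Ioc,
        ENNReal.toReal_ofReal (by linarith), smul_eq_mul, mul_comm]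
    have hs2 := aux_fub 1 T v φ hvm hvi hφm C hφb
    have hs3 : (∫ y, φ y * ∫ x in Ioc 1 T, v (x - y)) =
        ∫ y, φ y * (Vt (T - y) - Vt (1 - y)) := by
      congr 1
      funext y
      rw [aux_shift v hvi 1 T y hT]
    have key : A * (T - 1) = ∫ y, φ y * (Vt (T - y) - Vt (1 - y)) := by
      rw [← hs3, ← hs2, hs1]
    have iT : Integrable (fun y => φ y * (Vt (T - y) - Vt (1 - y))) := by
      refine aux_integrable_of_bddsupp
        (hφm.mul ((hVmeas.comp (measurable_const.sub measurable_id)).sub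
          (hVmeas.comp (measurable_const.sub measurable_id)))) (|T| + d + 2) (C * (4 * d)) ?_ ?_
      · intro y
        calc |φ y * (Vt (T - y) - Vt (1 - y))| = |φ y| * |Vt (T - y) - Vt (1 - y)| := abs_mul _ _
          _ ≤ C * (4 * d) := by
              apply mul_le_mul (hφb y) ?_ (abs_nonneg _) hC0
              calc |Vt (T - y) - Vt (1 - y)| ≤ |Vt (T - y)| + |Vt (1 - y)| := abs_sub _ _
                _ ≤ 4 * d := by linarith [hVb (T - y), hVb (1 - y)]
      · intro y hy
        have hTabs1 : T ≤ |T| := le_abs_self T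
        have hTabs2 : -|T| ≤ T := neg_abs_le T
        have hT1 : (1:ℝ) ≤ |T| := le_trans hT hTabs1
        rcases aux_notIoo hy with h | h
        · rw [hVd (T - y) (by linarith), hVd (1 - y) (by linarith)]
          ring
        · rw [hV0 (T - y) (by linarith), hV0 (1 - y) (by linarith)]
          ring
    have hb1 : |A * (T - 1)| ≤ ∫ y, |φ y| * |Vt (T - y) - Vt (1 - y)| := by
      rw [key]
      simpa [Real.norm_eq_abs, abs_mul] using
        norm_integral_le_integral_norm (μ := volume) (fun y => φ y * (Vt (T - y) - Vt (1 - y)))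
    have iV1 : Integrable (fun y => |Vt (T - y)|) := hI1.comp_sub_left T
    have iV2 : Integrable (fun y => |Vt (1 - y)|) := hI1.comp_sub_left 1
    have hb2 : (∫ y, |φ y| * |Vt (T - y) - Vt (1 - y)|) ≤
        ∫ y, (C * |Vt (T - y)| + C * |Vt (1 - y)|) := by
      refine integral_mono (iT.abs.congr (Filter.Eventually.of_forall fun y => abs_mul _ _))
        ((iV1.const_mul C).add (iV2.const_mul C)) fun y => ?_
      calc |φ y| * |Vt (T - y) - Vt (1 - y)|
          ≤ C * (|Vt (T - y)| + |Vt (1 - y)|) :=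
            mul_le_mul (hφb y) (abs_sub _ _) (abs_nonneg _) hC0
        _ = C * |Vt (T - y)| + C * |Vt (1 - y)| := by ring
    have hb3 : (∫ y, (C * |Vt (T - y)| + C * |Vt (1 - y)|)) = 2 * C * I1 := by
      rw [integral_add (iV1.const_mul C) (iV2.const_mul C), integral_const_mul, integral_const_mul,
        integral_sub_left_eq_self (fun z => |Vt z|) volume T,
        integral_sub_left_eq_self (fun z => |Vt z|) volume 1, hI1def]
      ring
    have habs : |A| * (T - 1) = |A * (T - 1)| := by
      rw [abs_mul, abs_of_nonneg (by linarith : (0:ℝ) ≤ T - 1)]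
    rw [habs]
    rw [hb3] at hb2
    linarith
  have hApos : 0 < |A| := abs_pos.2 (ne_of_lt hAneg)
  have hnum : 0 ≤ 2 * C * I1 := mul_nonneg (mul_nonneg (by norm_num) hC0) hI1nn
  set T0 : ℝ := 1 + (2 * C * I1 + 1) / |A| with hT0
  have hT0ge : 1 ≤ T0 := by
    rw [hT0]
    have : 0 ≤ (2 * C * I1 + 1) / |A| := div_nonneg (by linarith) (abs_nonneg A)
    linarith
  have hfin := hTbd T0 hT0ge
  have heq : |A| * (T0 - 1) = 2 * C * I1 + 1 := by
    rw [hT0]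
    field_simp
    ring
  rw [heq] at hfin
  linarith
lemma aux_ball
    (d : ℝ) (hd : 0 < d)
    (J : ℝ → ℝ) (hJc : Continuous J) (hJ0 : ∀ z, 0 ≤ J z)
    (hJs : ∀ z, z ∉ Ioo (-d) d → J z = 0)
    (hJ1 : ∫ z, J z = 1)
    (φ : ℝ → ℝ) (hφm : Measurable φ) (C : ℝ) (hφb : ∀ x, |φ x| ≤ C)
    (hφ0 : ∀ x ∈ Ioo (-d) (0 : ℝ), φ x = 0)
    (s : ℝ) (hs0 : 0 ≤ s) (hle : ∀ y : ℝ, 0 ≤ y → φ y ≤ s)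
    (γ : ℝ) (hγpos : 0 < γ)
    (hγle : ∀ z ∈ Icc (-(3 * d / 4)) (3 * d / 4), γ ≤ J z)
    (c : ℝ) (hc : 0 ≤ c) (hceq : (∫ y, J (c - y) * φ y) = φ c)
    (η : ℝ) (hη : 0 < η) :
    volume {y : ℝ | 0 ≤ y ∧ |y - c| ≤ 3 * d / 4 ∧ φ y ≤ s - η} ≤
      ENNReal.ofReal ((s - φ c) / (γ * η)) := by
  have hJK : HasCompactSupport J :=
    HasCompactSupport.intro isCompact_Icc
      (fun x hx => hJs x (fun hx' => hx (Ioo_subset_Icc_self hx')))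
  have hJi : Integrable J := hJc.integrable_of_hasCompactSupport hJK
  set A : Set ℝ := {y : ℝ | 0 ≤ y ∧ |y - c| ≤ 3 * d / 4 ∧ φ y ≤ s - η} with hA
  have hAm : MeasurableSet A := by
    have h1 : MeasurableSet {y : ℝ | 0 ≤ y} := measurableSet_Ici
    have h2 : MeasurableSet {y : ℝ | |y - c| ≤ 3 * d / 4} :=
      measurableSet_le (continuous_id.sub continuous_const).abs.measurable measurable_const
    have h3 : MeasurableSet {y : ℝ | φ y ≤ s - η} := measurableSet_le hφm measurable_const
    exact h1.inter (h2.inter h3)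
  have hAsub : A ⊆ Icc (c - 3 * d / 4) (c + 3 * d / 4) := by
    intro y hy
    have := abs_le.1 hy.2.1
    exact ⟨by linarith [this.1], by linarith [this.2]⟩
  have hAfin : volume A ≠ ⊤ :=
    ((measure_mono hAsub).trans_lt measure_Icc_lt_top).ne
  -- the comparison function
  set ψ : ℝ → ℝ := fun y => s - η * A.indicator (fun _ => (1:ℝ)) y with hψ
  have hψm : Measurable ψ :=
    measurable_const.sub (measurable_const.mul (measurable_const.indicator hAm))
  have hψb : ∀ y, |ψ y| ≤ s + η := by
    intro y
    by_cases hy : y ∈ A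
    · simp only [hψ, indicator_of_mem hy]
      rw [abs_le]
      constructor <;> [skip; skip] <;> nlinarith
    · simp only [hψ, indicator_of_notMem hy]
      rw [abs_le]
      constructor <;> nlinarith
  have i_lhs : Integrable (fun y => J (c - y) * φ y) :=
    aux_int_mul_bdd (hJi.comp_sub_left c) hφm.aestronglyMeasurable C hφb
  have i_rhs : Integrable (fun y => J (c - y) * ψ y) :=
    aux_int_mul_bdd (hJi.comp_sub_left c) hψm.aestronglyMeasurable (s + η) hψb
  have hpt : ∀ y : ℝ, J (c - y) * φ y ≤ J (c - y) * ψ y := by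
    intro y
    by_cases hy0 : (0:ℝ) ≤ y
    · refine mul_le_mul_of_nonneg_left ?_ (hJ0 _)
      by_cases hyA : y ∈ A
      · simp only [hψ, indicator_of_mem hyA]
        have := hyA.2.2
        linarith
      · simp only [hψ, indicator_of_notMem hyA]
        have := hle y hy0
        linarith
    · by_cases hyd : -d < y
      · have hφy : φ y = 0 := hφ0 y ⟨hyd, not_le.1 hy0⟩
        have hyA : y ∉ A := fun hmem => hy0 hmem.1
        simp only [hψ, indicator_of_notMem hyA]
        rw [hφy]
        simp only [mul_zero, mul_one, sub_zero]
        have : (0:ℝ) ≤ J (c - y) * s := mul_nonneg (hJ0 _) hs0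
        linarith
      · push_neg at hyd
        have hJz : J (c - y) = 0 :=
          hJs _ (fun hm => absurd hm.2 (not_lt.2 (by linarith)))
        rw [hJz]
        simp
  have hint : φ c ≤ ∫ y, J (c - y) * ψ y := by
    rw [← hceq]
    exact integral_mono i_lhs i_rhs hpt
  -- compute the RHS integral
  have hmass : (∫ y, J (c - y)) = 1 := by
    rw [integral_sub_left_eq_self J volume c]
    exact hJ1
  have iJc : Integrable (fun y => J (c - y)) := hJi.comp_sub_left c
  have iJind : Integrable (fun y => J (c - y) * A.indicator (fun _ => (1:ℝ)) y) :=
    aux_int_mul_bdd iJc (measurable_const.indicator hAm).aestronglyMeasurable 1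
      (fun y => by
        by_cases hy : y ∈ A
        · simp [indicator_of_mem hy]
        · simp [indicator_of_notMem hy])
  have hexp : (∫ y, J (c - y) * ψ y) =
      s - η * ∫ y, J (c - y) * A.indicator (fun _ => (1:ℝ)) y := by
    have h1 : ∀ y : ℝ, J (c - y) * ψ y =
        J (c - y) * s - η * (J (c - y) * A.indicator (fun _ => (1:ℝ)) y) := by
      intro y
      simp only [hψ]
      ring
    have h2 : (∫ y, J (c - y) * ψ y) =
        (∫ y, J (c - y) * s) - ∫ y, η * (J (c - y) * A.indicator (fun _ => (1:ℝ)) y) := by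
      rw [← integral_sub (iJc.mul_const s) (iJind.const_mul η)]
      congr 1
      funext y
      exact h1 y
    rw [h2, integral_const_mul, integral_mul_const, hmass]
    ring
  have hindint : (∫ y, J (c - y) * A.indicator (fun _ => (1:ℝ)) y) = ∫ y in A, J (c - y) := by
    rw [← integral_indicator hAm]
    congr 1
    funext y
    by_cases hy : y ∈ A
    · rw [indicator_of_mem hy, indicator_of_mem hy, mul_one]
    · rw [indicator_of_notMem hy, indicator_of_notMem hy, mul_zero]
  have hlow : γ * (volume A).toReal ≤ ∫ y in A, J (c - y) := by
    refine setIntegral_ge_of_const_le_real hAm hAfin (fun y hy => ?_) iJc.integrableOn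
    refine hγle (c - y) ?_
    have := abs_le.1 hy.2.1
    exact ⟨by linarith [this.2], by linarith [this.1]⟩
  have hkey : γ * η * (volume A).toReal ≤ s - φ c := by
    have h1 : φ c ≤ s - η * (γ * (volume A).toReal) := by
      have := hint
      rw [hexp, hindint] at this
      nlinarith [hlow, hη]
    nlinarith
  rw [← ENNReal.ofReal_toReal hAfin]
  apply ENNReal.ofReal_le_ofReal
  rw [le_div_iff₀ (by positivity)]
  linarith [hkey]

theorem near_sup_measure_estimate
    (d : ℝ) (hd : 0 < d)
    (J : ℝ → ℝ) (hJc : Continuous J) (hJ0 : ∀ z, 0 ≤ J z)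
    (hJe : ∀ z, J (-z) = J z)
    (hJs : ∀ z, z ∉ Ioo (-d) d → J z = 0)
    (hJpos : ∀ z ∈ Ioo (-d) d, 0 < J z)
    (hJ1 : ∫ z, J z = 1)
    (φ : ℝ → ℝ) (hφm : Measurable φ) (hφb : ∃ C, ∀ x, |φ x| ≤ C)
    (hφeq : ∀ x : ℝ, 0 ≤ x → (∫ y, J (x - y) * φ y) = φ x)
    (hφ0 : ∀ x ∈ Ioo (-d) (0 : ℝ), φ x = 0)
    (ε : ℝ) (hε : 0 < ε)
    (φp γ : ℝ) (hφp : φp = sSup (φ '' Ici 0))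
    (hγ : γ = sInf (J '' Icc (-(3 * d / 4)) (3 * d / 4)))
    (hsmall : ε ^ 2 / γ < d / 4)
    (xb : ℝ) (hxb : 0 ≤ xb) (hval : φ xb ≥ φp - ε ^ 4) :
    volume {x : ℝ | 0 ≤ x ∧ |x - xb| < d ∧ φ x ≤ φp - ε} ≤ ENNReal.ofReal (3 * ε / γ) := by
  obtain ⟨C, hφb⟩ := hφb
  have hC0 : 0 ≤ C := le_trans (abs_nonneg _) (hφb 0)
  have himg : IsCompact (J '' Icc (-(3 * d / 4)) (3 * d / 4)) := isCompact_Icc.image hJc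
  have hne : (J '' Icc (-(3 * d / 4)) (3 * d / 4)).Nonempty := by
    refine ⟨J 0, mem_image_of_mem J ⟨by linarith, by linarith⟩⟩
  have hγmem : γ ∈ J '' Icc (-(3 * d / 4)) (3 * d / 4) := by
    rw [hγ]
    exact himg.sInf_mem hne
  obtain ⟨z0, hz0, hz0eq⟩ := hγmem
  have hγpos : 0 < γ := by
    rw [← hz0eq]
    apply hJpos z0
    have h1 := hz0.1
    have h2 := hz0.2
    exact ⟨by linarith, by linarith⟩
  have hγle : ∀ z ∈ Icc (-(3 * d / 4)) (3 * d / 4), γ ≤ J z := by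
    intro z hz
    rw [hγ]
    exact csInf_le himg.bddBelow (mem_image_of_mem J hz)
  have hγne : γ ≠ 0 := ne_of_gt hγpos
  have hεne : ε ≠ 0 := ne_of_gt hε
  have hs0 : 0 ≤ φp := by
    rw [hφp]
    exact aux_sup_nonneg d hd J hJc hJ0 hJe hJs hJ1 φ hφm C hφb hφeq hφ0 γ hγpos hγle
  have hbdd : BddAbove (φ '' Ici 0) := by
    refine ⟨C, ?_⟩
    rintro _ ⟨x, -, rfl⟩
    exact (abs_le.1 (hφb x)).2
  have hle : ∀ y : ℝ, 0 ≤ y → φ y ≤ φp := by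
    intro y hy
    rw [hφp]
    exact le_csSup hbdd (mem_image_of_mem φ hy)
  have hε2 : 0 < ε ^ 2 := by positivity
  have hT : volume {y : ℝ | 0 ≤ y ∧ |y - xb| ≤ 3 * d / 4 ∧ φ y ≤ φp - ε ^ 2} ≤
      ENNReal.ofReal (ε ^ 2 / γ) := by
    refine le_trans (aux_ball d hd J hJc hJ0 hJs hJ1 φ hφm C hφb hφ0 φp hs0 hle γ hγpos hγle
      xb hxb (hφeq xb hxb) (ε ^ 2) hε2) ?_
    apply ENNReal.ofReal_le_ofReal
    have h1 : φp - φ xb ≤ ε ^ 4 := by linarith [hval]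
    have h2 : (φp - φ xb) / (γ * ε ^ 2) ≤ ε ^ 4 / (γ * ε ^ 2) :=
      (div_le_div_iff_of_pos_right (by positivity)).2 h1
    have h3 : ε ^ 4 / (γ * ε ^ 2) = ε ^ 2 / γ := by
      field_simp
    linarith
  have hsel : ∀ m : ℝ, 0 ≤ m → (∀ y ∈ Icc m (m + d / 4), |y - xb| ≤ 3 * d / 4) →
      ∃ cc, 0 ≤ cc ∧ cc ∈ Icc m (m + d / 4) ∧ φp - φ cc ≤ ε ^ 2 := by
    intro m hm hmemb
    by_contra hcon
    push_neg at hcon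
    have hsub : Icc m (m + d / 4) ⊆
        {y : ℝ | 0 ≤ y ∧ |y - xb| ≤ 3 * d / 4 ∧ φ y ≤ φp - ε ^ 2} := by
      intro y hy
      have hy0 : 0 ≤ y := le_trans hm hy.1
      refine ⟨hy0, hmemb y hy, ?_⟩
      have := hcon y hy0 hy
      linarith
    have h1 : ENNReal.ofReal (d / 4) ≤ ENNReal.ofReal (ε ^ 2 / γ) := by
      calc ENNReal.ofReal (d / 4) = volume (Icc m (m + d / 4)) := by
            rw [Real.volume_Icc]
            congr 1
            ring
        _ ≤ _ := le_trans (measure_mono hsub) hT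
    rw [ENNReal.ofReal_le_ofReal_iff (by positivity)] at h1
    linarith [hsmall]
  obtain ⟨c1, hc10, hc1mem, hc1val⟩ := hsel (xb + d / 4) (by linarith)
    (by
      intro y hy
      rw [abs_le]
      constructor
      · linarith [hy.1]
      · linarith [hy.2])
  obtain ⟨c2, hc20, hc2mem, hc2val⟩ := hsel (max 0 (xb - d / 2)) (le_max_left _ _)
    (by
      intro y hy
      have hmx : max 0 (xb - d / 2) ≤ xb := max_le hxb (by linarith)
      have hmg : xb - d / 2 ≤ max 0 (xb - d / 2) := le_max_right _ _
      rw [abs_le]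
      constructor
      · linarith [hy.1]
      · linarith [hy.2])
  have hcov : {x : ℝ | 0 ≤ x ∧ |x - xb| < d ∧ φ x ≤ φp - ε} ⊆
      {y : ℝ | 0 ≤ y ∧ |y - c1| ≤ 3 * d / 4 ∧ φ y ≤ φp - ε} ∪
      {y : ℝ | 0 ≤ y ∧ |y - c2| ≤ 3 * d / 4 ∧ φ y ≤ φp - ε} := by
    intro y hy
    obtain ⟨hy0, hyd, hyv⟩ := hy
    have hyd' := abs_lt.1 hyd
    rcases le_or_gt (xb - d / 4) y with hcase | hcase
    · left
      refine ⟨hy0, ?_, hyv⟩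
      rw [abs_le]
      constructor
      · linarith [hc1mem.2]
      · linarith [hc1mem.1, hyd'.2]
    · right
      refine ⟨hy0, ?_, hyv⟩
      rw [abs_le]
      have h1 : xb - d / 2 ≤ c2 := le_trans (le_max_right _ _) hc2mem.1
      constructor
      · rcases le_total (xb - d / 2) 0 with hmx | hmx
        · have hm2 : max 0 (xb - d / 2) = 0 := max_eq_left hmx
          have h2 := hc2mem.2
          rw [hm2] at h2
          linarith
        · have hm2 : max 0 (xb - d / 2) = xb - d / 2 := max_eq_right hmx
          have h2 := hc2mem.2
          rw [hm2] at h2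
          linarith [hyd'.1]
      · linarith
  have hb1 := aux_ball d hd J hJc hJ0 hJs hJ1 φ hφm C hφb hφ0 φp hs0 hle γ hγpos hγle
    c1 hc10 (hφeq c1 hc10) ε hε
  have hb2 := aux_ball d hd J hJc hJ0 hJs hJ1 φ hφm C hφb hφ0 φp hs0 hle γ hγpos hγle
    c2 hc20 (hφeq c2 hc20) ε hε
  have hball : ∀ cc : ℝ, φp - φ cc ≤ ε ^ 2 →
      ENNReal.ofReal ((φp - φ cc) / (γ * ε)) ≤ ENNReal.ofReal (ε / γ) := by
    intro cc hcc
    apply ENNReal.ofReal_le_ofReal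
    have h2 : (φp - φ cc) / (γ * ε) ≤ ε ^ 2 / (γ * ε) :=
      (div_le_div_iff_of_pos_right (by positivity)).2 hcc
    have h3 : ε ^ 2 / (γ * ε) = ε / γ := by
      field_simp
    linarith
  calc volume {x : ℝ | 0 ≤ x ∧ |x - xb| < d ∧ φ x ≤ φp - ε}
      ≤ volume ({y : ℝ | 0 ≤ y ∧ |y - c1| ≤ 3 * d / 4 ∧ φ y ≤ φp - ε} ∪
        {y : ℝ | 0 ≤ y ∧ |y - c2| ≤ 3 * d / 4 ∧ φ y ≤ φp - ε}) := measure_mono hcov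
    _ ≤ volume {y : ℝ | 0 ≤ y ∧ |y - c1| ≤ 3 * d / 4 ∧ φ y ≤ φp - ε} +
        volume {y : ℝ | 0 ≤ y ∧ |y - c2| ≤ 3 * d / 4 ∧ φ y ≤ φp - ε} := measure_union_le _ _
    _ ≤ ENNReal.ofReal (ε / γ) + ENNReal.ofReal (ε / γ) :=
        add_le_add (le_trans hb1 (hball c1 hc1val)) (le_trans hb2 (hball c2 hc2val))
    _ = ENNReal.ofReal (ε / γ + ε / γ) := (ENNReal.ofReal_add (by positivity) (by positivity)).symm
    _ ≤ ENNReal.ofReal (3 * ε / γ) := by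
        apply ENNReal.ofReal_le_ofReal
        rw [← add_div]
        exact (div_le_div_iff_of_pos_right hγpos).2 (by linarith)
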